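/- There is no family of binary random variables X_1, X_2, X_3, each uniform on {0,1}, such that P(X_1 = X_2 = X_3) = 1, with the following structure: there exist independent sigma-algebras F_1, F_2, F_3 such that each X_i is measurable with respect to the sigma-algebra generated by the two F_j with j ≠ i. -/

import Mathlib

open MeasureTheory ProbabilityTheory

/-- There is no family of binary random variables `X 0, X 1, X 2`, each uniform on `{0,1}`,
agreeing almost surely (`P(X 0 = X 1 = X 2) = 1`), such that there exist independent
σ-algebras `F 0, F 1, F 2` with each `X i` measurable with respect to the σ-algebra
generated by the two `F j` with `j ≠ i`. -/
theorem stmt18 :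
    ¬ ∃ (Ω : Type) (mΩ : MeasurableSpace Ω) (μ : @Measure Ω mΩ)
        (_ : IsProbabilityMeasure μ)
        (F : Fin 3 → MeasurableSpace Ω) (X : Fin 3 → Ω → Bool),
      (∀ i, F i ≤ mΩ) ∧ iIndep F μ ∧
      (∀ i, Measurable[⨆ j, ⨆ _ : j ≠ i, F j] (X i)) ∧
      (∀ i, μ {ω | X i ω = true} = 1 / 2 ∧ μ {ω | X i ω = false} = 1 / 2) ∧
      μ {ω | X 0 ω = X 1 ω ∧ X 1 ω = X 2 ω} = 1 := by
  rintro ⟨Ω, mΩ, μ, hprob, F, X, hle, hindep, hmeas, huni, hagree⟩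
  -- the join σ-algebras
  set M : Fin 3 → MeasurableSpace Ω := fun i => ⨆ j, ⨆ _ : j ≠ i, F j with hMdef
  have hMle : ∀ i, M i ≤ mΩ := by
    intro i
    exact iSup_le fun j => iSup_le fun _ => hle j
  have hFM : ∀ {j i : Fin 3}, j ≠ i → F j ≤ M i := by
    intro j i hj
    exact le_iSup_of_le j (le_iSup_of_le hj le_rfl)
  -- the events A i = {X i = true}
  set A : Fin 3 → Set Ω := fun i => {ω | X i ω = true} with hAdef
  have hAmeas : ∀ i, MeasurableSet[M i] (A i) := by
    intro i
    exact hmeas i (measurableSet_singleton true)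
  have hAmeas' : ∀ i, MeasurableSet (A i) := fun i => hMle i _ (hAmeas i)
  have hA : ∀ i, μ (A i) = 1 / 2 := fun i => (huni i).1
  -- independences
  have hIndMF : ∀ i, Indep (M i) (F i) μ := by
    intro i
    have h := indep_iSup_of_disjoint hle hindep (S := {j | j ≠ i}) (T := {i})
      (by simp [Set.disjoint_left])
    simpa [hMdef] using h
  have hInd12 : Indep (F 1) (F 2) μ := hindep.indep (by decide)
  -- almost-sure agreement
  have hX : ∀ i, Measurable (X i) := fun i => (hmeas i).mono (hMle i) le_rfl
  have hEmeas : MeasurableSet {ω | X 0 ω = X 1 ω ∧ X 1 ω = X 2 ω} := by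
    have h1 : MeasurableSet {ω | X 0 ω = X 1 ω} :=
      measurableSet_eq_fun (hX 0) (hX 1)
    have h2 : MeasurableSet {ω | X 1 ω = X 2 ω} :=
      measurableSet_eq_fun (hX 1) (hX 2)
    exact h1.inter h2
  have hae : ∀ᵐ ω ∂μ, X 0 ω = X 1 ω ∧ X 1 ω = X 2 ω := by
    rw [ae_iff]
    have := (prob_compl_eq_zero_iff hEmeas).2 hagree
    simpa [Set.compl_setOf] using this
  have hcongr02 : ∀ s : Set Ω, μ (A 0 ∩ s) = μ (A 2 ∩ s) := by
    intro s
    refine measure_congr ?_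
    filter_upwards [hae] with ω hω
    have hx : X 0 ω = X 2 ω := hω.1.trans hω.2
    refine eq_iff_iff.mpr ?_
    constructor
    · rintro ⟨h1, h2⟩; exact ⟨show _ = _ from hx.symm.trans h1, h2⟩
    · rintro ⟨h1, h2⟩; exact ⟨show _ = _ from hx.trans h1, h2⟩
  have hcongr21 : ∀ s : Set Ω, μ (A 2 ∩ s) = μ (A 1 ∩ s) := by
    intro s
    refine measure_congr ?_
    filter_upwards [hae] with ω hω
    have hx : X 2 ω = X 1 ω := hω.2.symm
    refine eq_iff_iff.mpr ?_
    constructor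
    · rintro ⟨h1, h2⟩; exact ⟨show _ = _ from hx.symm.trans h1, h2⟩
    · rintro ⟨h1, h2⟩; exact ⟨show _ = _ from hx.trans h1, h2⟩
  -- the π-system generating M 0
  set C : Set (Set Ω) :=
    {t | ∃ t1 t2, MeasurableSet[F 1] t1 ∧ MeasurableSet[F 2] t2 ∧ t1 ∩ t2 = t} with hCdef
  have hpi : IsPiSystem C := by
    rintro s ⟨s1, s2, hs1, hs2, rfl⟩ t ⟨t1, t2, ht1, ht2, rfl⟩ -
    exact ⟨s1 ∩ t1, s2 ∩ t2, hs1.inter ht1, hs2.inter ht2, by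
      rw [Set.inter_inter_inter_comm]⟩
  have hgen : M 0 = MeasurableSpace.generateFrom C := by
    refine le_antisymm ?_ ?_
    · refine iSup_le fun j => iSup_le fun hj => ?_
      fin_cases j
      · exact absurd rfl hj
      · intro s hs
        exact MeasurableSpace.measurableSet_generateFrom
          ⟨s, Set.univ, hs, MeasurableSet.univ, Set.inter_univ s⟩
      · intro s hs
        exact MeasurableSpace.measurableSet_generateFrom
          ⟨Set.univ, s, MeasurableSet.univ, hs, Set.univ_inter s⟩
    · refine MeasurableSpace.generateFrom_le ?_
      rintro t ⟨t1, t2, ht1, ht2, rfl⟩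
      exact (hFM (by decide) _ ht1).inter (hFM (by decide) _ ht2)
  -- key computation on the π-system
  have hbasic : ∀ t ∈ C, μ (A 0 ∩ t) = 1 / 2 * μ t := by
    rintro t ⟨t1, t2, ht1, ht2, rfl⟩
    have h21 : MeasurableSet[M 2] (A 2 ∩ t1) :=
      (hAmeas 2).inter (hFM (by decide : (1 : Fin 3) ≠ 2) _ ht1)
    calc μ (A 0 ∩ (t1 ∩ t2)) = μ ((A 2 ∩ t1) ∩ t2) := by
          rw [hcongr02, Set.inter_assoc]
      _ = μ (A 2 ∩ t1) * μ t2 :=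
          ((Indep_iff _ _ _).1 (hIndMF 2)) _ _ h21 ht2
      _ = μ (A 1 ∩ t1) * μ t2 := by rw [hcongr21]
      _ = (μ (A 1) * μ t1) * μ t2 := by
          rw [((Indep_iff _ _ _).1 (hIndMF 1)) _ _ (hAmeas 1) ht1]
      _ = 1 / 2 * (μ t1 * μ t2) := by rw [hA 1, mul_assoc]
      _ = 1 / 2 * μ (t1 ∩ t2) := by
          rw [((Indep_iff _ _ _).1 hInd12) _ _ ht1 ht2]
  -- extend to the whole σ-algebra M 0 by the π-λ theorem
  have key : ∀ t, MeasurableSet[M 0] t → μ (A 0 ∩ t) = 1 / 2 * μ t := by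
    refine MeasurableSpace.induction_on_inter (m := M 0) hgen hpi ?_ hbasic ?_ ?_
    · simp
    · intro t htM ih
      have ht : MeasurableSet t := hMle 0 _ htM
      have h1 : μ (A 0 ∩ t) + μ (A 0 ∩ tᶜ) = μ (A 0) := by
        have := measure_inter_add_diff (μ := μ) (A 0) ht
        rwa [Set.diff_eq] at this
      have h2 : μ t + μ tᶜ = 1 := by
        rw [measure_add_measure_compl ht, measure_univ]
      have hfin : 1 / 2 * μ t ≠ ⊤ := by
        exact ENNReal.mul_ne_top (by norm_num) (measure_ne_top μ t)
      have hL : μ (A 0 ∩ tᶜ) + 1 / 2 * μ t = 1 / 2 := by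
        rw [← ih, add_comm, h1, hA 0]
      have hR : 1 / 2 * μ tᶜ + 1 / 2 * μ t = 1 / 2 := by
        rw [← mul_add, add_comm (μ tᶜ) (μ t), h2, mul_one]
      exact WithTop.add_right_cancel hfin (hL.trans hR.symm)
    · intro f hdisj hfM ihf
      have hf : ∀ n, MeasurableSet (f n) := fun n => hMle 0 _ (hfM n)
      rw [Set.inter_iUnion, measure_iUnion ?_ (fun n => (hAmeas' 0).inter (hf n)),
        measure_iUnion hdisj hf]
      · rw [← ENNReal.tsum_mul_left]
        exact tsum_congr fun n => ihf n
      · intro m n hmn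
        exact (hdisj hmn).mono (Set.inter_subset_right) (Set.inter_subset_right)
  -- conclude
  have := key (A 0) (hAmeas 0)
  rw [Set.inter_self, hA 0] at this
  have h2 := congrArg ENNReal.toReal this
  norm_num [ENNReal.toReal_mul, ENNReal.toReal_div] at h2
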